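/- Let P_{b,r}(y) = y^4(b^2 r + 2br + r) + y^3(-3b^2 r - 4b^2 - 4br - r + 4) + y^2(3b^2 r + 12b^2 + 2br - 2b) + y(-b^2 r - 12b^2 + 2b) + 4b^2, viewed as a function of b. For all b ≥ 0, 0 < y < 1 and 0 < r ≤ 4, the derivative ∂P_{b,r}/∂b = 2(1-y)^3(4 - ry)b + 2y(1-y)(1 + yr(1-y)) is strictly positive. -/

import Mathlib

noncomputable def P (b r y : ℝ) : ℝ :=
  y ^ 4 * (b ^ 2 * r + 2 * b * r + r)
    + y ^ 3 * (-3 * b ^ 2 * r - 4 * b ^ 2 - 4 * b * r - r + 4)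
    + y ^ 2 * (3 * b ^ 2 * r + 12 * b ^ 2 + 2 * b * r - 2 * b)
    + y * (-(b ^ 2) * r - 12 * b ^ 2 + 2 * b) + 4 * b ^ 2

theorem stmt_8 (b r y : ℝ) (hb : 0 ≤ b) (hy : 0 < y) (hy1 : y < 1)
    (hr : 0 < r) (hr4 : r ≤ 4) :
    HasDerivAt (fun t : ℝ => P t r y)
      (2 * (1 - y) ^ 3 * (4 - r * y) * b + 2 * y * (1 - y) * (1 + y * r * (1 - y))) b ∧
    0 < 2 * (1 - y) ^ 3 * (4 - r * y) * b + 2 * y * (1 - y) * (1 + y * r * (1 - y)) := by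
  constructor
  · have h2 : HasDerivAt (fun t : ℝ => t ^ 2) (2 * b) b := by
      simpa using hasDerivAt_pow 2 b
    have h :
        HasDerivAt (fun t : ℝ => P t r y)
          ((y ^ 4 * r - 3 * y ^ 3 * r - 4 * y ^ 3 + 3 * y ^ 2 * r + 12 * y ^ 2
              - y * r - 12 * y + 4) * (2 * b)
            + (y ^ 4 * (2 * r) - 4 * y ^ 3 * r + y ^ 2 * (2 * r) - 2 * y ^ 2 + 2 * y)) b := by
      have := ((h2.const_mul (y ^ 4 * r - 3 * y ^ 3 * r - 4 * y ^ 3 + 3 * y ^ 2 * r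
          + 12 * y ^ 2 - y * r - 12 * y + 4)).add
          ((hasDerivAt_id b).const_mul
            (y ^ 4 * (2 * r) - 4 * y ^ 3 * r + y ^ 2 * (2 * r) - 2 * y ^ 2 + 2 * y))).add_const
          (y ^ 4 * r - y ^ 3 * r + 4 * y ^ 3)
      convert this using 2 with t
      · rfl
      · rfl
      · simp only [P, id, Pi.add_apply]; ring
      · ring
    convert h using 1
    ring
  · have hry : r * y < 4 := by nlinarith
    have h0 : 0 < 1 - y := by linarith
    have h1 : 0 ≤ 2 * (1 - y) ^ 3 * (4 - r * y) * b := by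
      have : 0 < 4 - r * y := by linarith
      positivity
    have h2 : 0 < 2 * y * (1 - y) * (1 + y * r * (1 - y)) := by positivity
    linarith
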